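/- Suppose Assumption (RC) holds: (i) x̄ is an M-stationary point of (P), ȳ ∈ Λ(x̄), and the upper error bound holds, i.e., there exist ρ_u > 0 and a neighborhood U of (x̄, c(x̄), ȳ) with ‖x − x̄‖ + ‖z − c(x̄)‖ + ‖y − ȳ‖ ≤ ρ_u·Θ(x, z, y) for all (x, z, y) ∈ U with z ∈ dom g; (ii) {(x^k, z^k, y^k)} is generated by the safeguarded implicit augmented Lagrangian algorithm with ε_k → 0; (iii) (x^k, y^k) → (x̄, ȳ); (iv) ŷ^k = y^{k−1} for all sufficiently large k. Assume additionally that ε_k = o(Θ_{k−1}), where Θ_k := Θ(x^k, z^k, y^k). Then: (1) for every q ∈ (0, 1) there exists μ̄(q) > 0 such that, if μ_k ≤ μ̄(q) for all sufficiently large k, then (x^k, z^k, y^k) → (x̄, c(x̄), ȳ) Q-linearly with rate q, i.e., eventually ‖x^k − x̄‖ + ‖z^k − c(x̄)‖ + ‖y^k − ȳ‖ ≤ q·(‖x^{k−1} − x̄‖ + ‖z^{k−1} − c(x̄)‖ + ‖y^{k−1} − ȳ‖); (2) if μ_k ↓ 0, then (x^k, z^k, y^k) → (x̄, c(x̄),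 ȳ) Q-superlinearly, i.e., the ratio of consecutive distances (‖x^k − x̄‖ + ‖z^k − c(x̄)‖ + ‖y^k − ȳ‖)/(‖x^{k−1} − x̄‖ + ‖z^{k−1} − c(x̄)‖ + ‖y^{k−1} − ȳ‖) tends to 0. -/

import Mathlib

open Filter Topology Bornology

noncomputable section

/-- Euclidean space `ℝ^d`. -/
abbrev Euc (d : ℕ) := EuclideanSpace ℝ (Fin d)

namespace Paper

variable {n m : ℕ}

/-- The effective domain of an extended-real-valued function. -/
def edom (g : Euc m → EReal) : Set (Euc m) := {z | g z < ⊤}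

/-- `g` maps into `ℝ ∪ {∞}` and is proper (its domain is nonempty). -/
def ProperFn (g : Euc m → EReal) : Prop := (∀ z, g z ≠ ⊥) ∧ ∃ z, g z < ⊤

/-- `z ↦ g z + ‖z‖²/(2μ)` is bounded below. -/
def ProxBoundedWith (g : Euc m → EReal) (μ : ℝ) : Prop :=
  ∃ b : ℝ, ∀ z, (b : EReal) ≤ g z + ((‖z‖ ^ 2 / (2 * μ) : ℝ) : EReal)

/-- `g` is prox-bounded. -/
def ProxBounded (g : Euc m → EReal) : Prop := ∃ μ : ℝ, 0 < μ ∧ ProxBoundedWith g μ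

/-- `0 < μ < μ_g`, where `μ_g` is the threshold of prox-boundedness of `g`. -/
def BelowThreshold (g : Euc m → EReal) (μ : ℝ) : Prop :=
  0 < μ ∧ ∃ μ' : ℝ, μ < μ' ∧ ProxBoundedWith g μ'

/-- The tangent cone to `Ω` at `wbar`. -/
def tangentCone {E : Type*} [NormedAddCommGroup E] [NormedSpace ℝ E]
    (Ω : Set E) (wbar : E) : Set E :=
  {v | ∃ (t : ℕ → ℝ) (w : ℕ → E), (∀ k, 0 < t k) ∧ Tendsto t atTop (𝓝 0) ∧
        Tendsto w atTop (𝓝 v) ∧ ∀ k, wbar + t k • w k ∈ Ω}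

/-- The regular (Fréchet) subdifferential of `g` at `zbar`. -/
def regSubdiff (g : Euc m → EReal) (zbar : Euc m) : Set (Euc m) :=
  {v | 0 ≤ liminf (fun z : Euc m =>
      (g z - g zbar - ((inner ℝ v (z - zbar) : ℝ) : EReal)) / ((‖z - zbar‖ : ℝ) : EReal))
      (𝓝[≠] zbar)}

/-- The limiting (Mordukhovich) subdifferential of `g` at `zbar`. -/
def limSubdiff (g : Euc m → EReal) (zbar : Euc m) : Set (Euc m) :=
  {v | ∃ zs vs : ℕ → Euc m, Tendsto zs atTop (𝓝 zbar) ∧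
        Tendsto (fun k => g (zs k)) atTop (𝓝 (g zbar)) ∧
        Tendsto vs atTop (𝓝 v) ∧ ∀ k, vs k ∈ regSubdiff g (zs k)}

/-- The subderivative `dg(zbar)(v)`. -/
def subderiv (g : Euc m → EReal) (zbar v : Euc m) : EReal :=
  liminf (fun p : ℝ × Euc m => (g (zbar + p.1 • p.2) - g zbar) / ((p.1 : ℝ) : EReal))
    ((𝓝[>] (0 : ℝ)) ×ˢ 𝓝 v)

/-- The second subderivative `d²g(zbar, ybar)(v)`. -/
def secondSubderiv (g : Euc m → EReal) (zbar ybar v : Euc m) : EReal :=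
  liminf (fun p : ℝ × Euc m =>
      (g (zbar + p.1 • p.2) - g zbar - ((p.1 * (inner ℝ ybar p.2 : ℝ) : ℝ) : EReal)) /
        ((p.1 ^ 2 / 2 : ℝ) : EReal))
    ((𝓝[>] (0 : ℝ)) ×ˢ 𝓝 v)

/-- The Lagrangian `L(·, y) = f + ⟨y, c ·⟩` of (P). -/
def LagFn (f : Euc n → ℝ) (c : Euc n → Euc m) (y : Euc m) : Euc n → ℝ :=
  fun x => f x + (inner ℝ y (c x) : ℝ)

/-- `∇ₓL(xbar, y) = 0`. -/
def gradLagZero (f : Euc n → ℝ) (c : Euc n → Euc m) (xbar : Euc n) (y : Euc m) : Prop :=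
  fderiv ℝ (LagFn f c y) xbar = 0

/-- The set `Λ(xbar)` of Lagrange multipliers of the M-stationarity system at `xbar`. -/
def Lambda (f : Euc n → ℝ) (c : Euc n → Euc m) (g : Euc m → EReal) (xbar : Euc n) :
    Set (Euc m) :=
  {y | gradLagZero f c xbar y ∧ y ∈ limSubdiff g (c xbar)}

/-- `∇²ₓₓL(xbar, y)[u, w]`. -/
def hessLag (f : Euc n → ℝ) (c : Euc n → Euc m) (xbar : Euc n) (y : Euc m) (u w : Euc n) : ℝ :=
  iteratedFDeriv ℝ 2 (LagFn f c y) xbar ![u, w]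

/-- The critical cone `C(xbar)` of (P). -/
def critCone (f : Euc n → ℝ) (c : Euc n → Euc m) (g : Euc m → EReal) (xbar : Euc n) :
    Set (Euc n) :=
  {u | ((fderiv ℝ f xbar u : ℝ) : EReal) + subderiv g (c xbar) (fderiv ℝ c xbar u) ≤ 0}

/-- The directional multiplier set `Λ(xbar, u)`. -/
def dirLambda (f : Euc n → ℝ) (c : Euc n → Euc m) (g : Euc m → EReal) (xbar : Euc n)
    (u : Euc n) : Set (Euc m) :=
  {y | gradLagZero f c xbar y ∧
    subderiv g (c xbar) (fderiv ℝ c xbar u) = ((inner ℝ y (fderiv ℝ c xbar u) : ℝ) : EReal) ∧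
    secondSubderiv g (c xbar) y (fderiv ℝ c xbar u) ≠ ⊥}

/-- The second-order sufficient condition (SOSC) for (P) at `xbar`. -/
def SOSC (f : Euc n → ℝ) (c : Euc n → Euc m) (g : Euc m → EReal) (xbar : Euc n) : Prop :=
  ∀ u ∈ critCone f c g xbar, u ≠ 0 → ∃ y ∈ dirLambda f c g xbar u,
    0 < ((hessLag f c xbar y u u : ℝ) : EReal) + secondSubderiv g (c xbar) y (fderiv ℝ c xbar u)

/-- The stationarity residual `Θ(x, z, y)`; the distance to the (possibly empty)
subdifferential is taken in `EReal` via an infimum. -/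
def Theta (f : Euc n → ℝ) (c : Euc n → Euc m) (g : Euc m → EReal)
    (x : Euc n) (z y : Euc m) : EReal :=
  ((‖fderiv ℝ (LagFn f c y) x‖ + ‖c x - z‖ : ℝ) : EReal) +
    ⨅ v ∈ limSubdiff g z, ((‖y - v‖ : ℝ) : EReal)

/-- The graphical derivative `D(∂g)(zbar, ybar)(v)` of the limiting subdifferential mapping. -/
def gDeriv (g : Euc m → EReal) (zbar ybar v : Euc m) : Set (Euc m) :=
  {η | (v, η) ∈ tangentCone {p : Euc m × Euc m | p.2 ∈ limSubdiff g p.1} (zbar, ybar)}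

/-- The Moreau envelope `g^μ(w)`. -/
def moreau (g : Euc m → EReal) (μ : ℝ) (w : Euc m) : EReal :=
  ⨅ z, (g z + ((‖z - w‖ ^ 2 / (2 * μ) : ℝ) : EReal))

/-- The augmented Lagrangian `L_μ(x, y)` of (P). -/
def ALfun (f : Euc n → ℝ) (c : Euc n → Euc m) (g : Euc m → EReal) (μ : ℝ)
    (x : Euc n) (y : Euc m) : EReal :=
  (f x : EReal) + moreau g μ (c x + μ • y) - ((μ / 2 * ‖y‖ ^ 2 : ℝ) : EReal)

/-- `xbar` is a strict local minimizer of (P). -/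
def StrictLocalMin (f : Euc n → ℝ) (c : Euc n → Euc m) (g : Euc m → EReal)
    (xbar : Euc n) : Prop :=
  c xbar ∈ edom g ∧ ∃ ρ : ℝ, 0 < ρ ∧ ∀ x : Euc n, ‖x - xbar‖ ≤ ρ → c x ∈ edom g → x ≠ xbar →
    (f xbar : EReal) + g (c xbar) < (f x : EReal) + g (c x)

open Classical in
/-- A sequence generated by the safeguarded implicit augmented Lagrangian method
(Algorithm 4.1) for problem (P). -/
structure ALMSeq (n m : ℕ) (f : Euc n → ℝ) (c : Euc n → Euc m) (g : Euc m → EReal) where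
  /-- sufficient-decrease parameter -/
  θ : ℝ
  /-- penalty-reduction parameter -/
  κ : ℝ
  hθ : 0 < θ ∧ θ < 1
  hκ : 0 < κ ∧ κ < 1
  /-- safeguarding set -/
  Y : Set (Euc m)
  hYne : Y.Nonempty
  hYbdd : IsBounded Y
  /-- primal iterates -/
  x : ℕ → Euc n
  /-- auxiliary (certificate) iterates -/
  z : ℕ → Euc m
  /-- safeguarded multiplier estimates -/
  yhat : ℕ → Euc m
  /-- multiplier iterates -/
  y : ℕ → Euc m
  /-- penalty parameters -/
  μ : ℕ → ℝ
  /-- inner tolerances -/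
  ε : ℕ → ℝ
  hyhatY : ∀ k, yhat k ∈ Y
  hεnn : ∀ k, 0 ≤ ε k
  hμthr : ∀ k, BelowThreshold g (μ k)
  /-- `z k ∈ prox_{μ_k g}(c(x^k) + μ_k ŷ^k)` -/
  hprox : ∀ k, ∀ w : Euc m,
    g (z k) + ((‖z k - (c (x k) + μ k • yhat k)‖ ^ 2 / (2 * μ k) : ℝ) : EReal) ≤
      g w + ((‖w - (c (x k) + μ k • yhat k)‖ ^ 2 / (2 * μ k) : ℝ) : EReal)
  /-- dual update rule -/
  hy : ∀ k, y k = yhat k + (μ k)⁻¹ • (c (x k) - z k)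
  /-- approximate stationarity for the subproblem, `‖∇ₓL^S_{μ_k}(x^k,z^k,ŷ^k)‖ ≤ ε_k` -/
  hdual : ∀ k, ‖fderiv ℝ (LagFn f c (y k)) (x k)‖ ≤ ε k
  /-- penalty update rule -/
  hμupd : ∀ k, μ (k + 1) =
    if k = 0 ∨ ‖c (x k) - z k‖ ≤ θ * ‖c (x (k - 1)) - z (k - 1)‖ then μ k else κ * μ k


-- ===== auxiliary lemmas =====

lemma ev_succ {p : ℕ → Prop} (h : ∀ᶠ k in atTop, p k) : ∀ᶠ k in atTop, p (k + 1) := by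
  obtain ⟨N, hN⟩ := eventually_atTop.mp h
  exact eventually_atTop.mpr ⟨N, fun k hk => hN _ (le_trans hk (Nat.le_succ _))⟩

lemma regSubdiff_subset_limSubdiff (g : Euc m → EReal) (z : Euc m) :
    regSubdiff g z ⊆ limSubdiff g z := fun v hv =>
  ⟨fun _ => z, fun _ => v, tendsto_const_nhds, tendsto_const_nhds, tendsto_const_nhds,
    fun _ => hv⟩

lemma fderiv_lag {f : Euc n → ℝ} {c : Euc n → Euc m} (hf : ContDiff ℝ 2 f)
    (hc : ContDiff ℝ 2 c) (y : Euc m) (x : Euc n) :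
    fderiv ℝ (LagFn f c y) x = fderiv ℝ f x + (innerSL ℝ y).comp (fderiv ℝ c x) := by
  have hdf : DifferentiableAt ℝ f x := (hf.differentiable (by norm_num)).differentiableAt
  have hdc : DifferentiableAt ℝ c x := (hc.differentiable (by norm_num)).differentiableAt
  have h2 : (fun x => (inner ℝ y (c x) : ℝ)) = (innerSL ℝ y) ∘ c := rfl
  have hdi : DifferentiableAt ℝ (fun x => (inner ℝ y (c x) : ℝ)) x := by
    rw [h2]; exact ((innerSL ℝ y).differentiableAt).comp x hdc
  have hLag : LagFn f c y = fun x => f x + (inner ℝ y (c x) : ℝ) := rfl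
  rw [hLag, fderiv_fun_add hdf hdi]
  congr 1
  rw [h2, fderiv_comp x ((innerSL ℝ y).differentiableAt) hdc, (innerSL ℝ y).fderiv]

lemma Hcd {f : Euc n → ℝ} {c : Euc n → Euc m} (hf : ContDiff ℝ 2 f) (hc : ContDiff ℝ 2 c) :
    ContDiff ℝ 1 (fun p : Euc n × Euc m =>
      fderiv ℝ f p.1 + (innerSL ℝ p.2).comp (fderiv ℝ c p.1)) := by
  have h1 : ContDiff ℝ 1 (fun p : Euc n × Euc m => fderiv ℝ f p.1) :=
    (hf.fderiv_right (by norm_num)).comp contDiff_fst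
  have h2 : ContDiff ℝ 1 (fun p : Euc n × Euc m => (innerSL ℝ p.2 : Euc m →L[ℝ] ℝ)) :=
    (innerSL ℝ : Euc m →L[ℝ] Euc m →L[ℝ] ℝ).contDiff.comp contDiff_snd
  have h3 : ContDiff ℝ 1 (fun p : Euc n × Euc m => fderiv ℝ c p.1) :=
    (hc.fderiv_right (by norm_num)).comp contDiff_fst
  exact h1.add (h2.clm_comp h3)

lemma prox_mem_regSubdiff (g : Euc m → EReal) (hgb : ∀ w, g w ≠ ⊥)
    {μ : ℝ} (hμ : 0 < μ) (u z : Euc m) (hz : g z ≠ ⊤)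
    (hmin : ∀ w, g z + ((‖z - u‖ ^ 2 / (2 * μ) : ℝ) : EReal) ≤
      g w + ((‖w - u‖ ^ 2 / (2 * μ) : ℝ) : EReal)) :
    μ⁻¹ • (u - z) ∈ regSubdiff g z := by
  set v := μ⁻¹ • (u - z) with hv
  obtain ⟨gz, hgz⟩ : ∃ r : ℝ, g z = (r : EReal) :=
    ⟨(g z).toReal, (EReal.coe_toReal hz (hgb z)).symm⟩
  have claim : ∀ w : Euc m, w ≠ z →
      ((-‖w - z‖ / (2 * μ) : ℝ) : EReal) ≤
        (g w - g z - ((inner ℝ v (w - z) : ℝ) : EReal)) / ((‖w - z‖ : ℝ) : EReal) := by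
    intro w hw
    have hd : (0:ℝ) < ‖w - z‖ := by
      rw [norm_pos_iff]; exact sub_ne_zero.mpr hw
    by_cases hwt : g w = ⊤
    · rw [hwt, hgz]
      have h1 : (⊤ : EReal) - (gz : EReal) - ((inner ℝ v (w - z) : ℝ) : EReal) = ⊤ := by
        rw [EReal.top_sub_coe, EReal.top_sub_coe]
      rw [h1, EReal.top_div_of_pos_ne_top (by exact_mod_cast hd) (EReal.coe_ne_top _)]
      exact le_top
    · obtain ⟨gw, hgw⟩ : ∃ r : ℝ, g w = (r : EReal) :=
        ⟨(g w).toReal, (EReal.coe_toReal hwt (hgb w)).symm⟩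
      rw [hgw, hgz]
      have key : gz + ‖z - u‖ ^ 2 / (2 * μ) ≤ gw + ‖w - u‖ ^ 2 / (2 * μ) := by
        have h := hmin w
        rw [hgz, hgw, ← EReal.coe_add, ← EReal.coe_add, EReal.coe_le_coe_iff] at h
        exact h
      have hcast : ((gw : EReal) - (gz : EReal) - ((inner ℝ v (w - z) : ℝ) : EReal)) /
          ((‖w - z‖ : ℝ) : EReal) =
          (((gw - gz - (inner ℝ v (w - z) : ℝ)) / ‖w - z‖ : ℝ) : EReal) := by
        rw [← EReal.coe_sub, ← EReal.coe_sub, EReal.coe_div]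
      rw [hcast, EReal.coe_le_coe_iff]
      have hexp : ‖w - u‖ ^ 2 = ‖w - z‖ ^ 2 + 2 * (inner ℝ (w - z) (z - u) : ℝ) + ‖z - u‖ ^ 2 := by
        have h := norm_add_sq_real (w - z) (z - u)
        rwa [sub_add_sub_cancel] at h
      have hip : (inner ℝ v (w - z) : ℝ) = μ⁻¹ * (inner ℝ (u - z) (w - z) : ℝ) :=
        real_inner_smul_left _ _ _
      have hsym : (inner ℝ (w - z) (z - u) : ℝ) = -(inner ℝ (u - z) (w - z) : ℝ) := by
        rw [real_inner_comm]
        have h : z - u = -(u - z) := by abel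
        rw [h, inner_neg_left]
      rw [div_le_div_iff₀ (by positivity) hd]
      have e1 : (gz + ‖z - u‖ ^ 2 / (2 * μ)) * (2 * μ) = gz * (2 * μ) + ‖z - u‖ ^ 2 := by
        field_simp
      have e2 : (gw + ‖w - u‖ ^ 2 / (2 * μ)) * (2 * μ) = gw * (2 * μ) + ‖w - u‖ ^ 2 := by
        field_simp
      have key2 : gz * (2 * μ) + ‖z - u‖ ^ 2 ≤ gw * (2 * μ) + ‖w - u‖ ^ 2 := by
        rw [← e1, ← e2]
        exact mul_le_mul_of_nonneg_right key (by positivity)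
      have hip2 : (inner ℝ v (w - z) : ℝ) * (2 * μ) = 2 * (inner ℝ (u - z) (w - z) : ℝ) := by
        rw [hip]; field_simp
      nlinarith [sq_nonneg (‖w - z‖ : ℝ)]
  by_cases hbot : (𝓝[≠] z : Filter (Euc m)) = ⊥
  · unfold regSubdiff
    simp only [Set.mem_setOf_eq, hbot, liminf_bot]
    exact le_top
  · haveI : (𝓝[≠] z : Filter (Euc m)).NeBot := ⟨hbot⟩
    have h2 : Tendsto (fun w : Euc m => ((-‖w - z‖ / (2 * μ) : ℝ) : EReal)) (𝓝[≠] z)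
        (𝓝 (0 : EReal)) := by
      have hr : Tendsto (fun w : Euc m => (-‖w - z‖ / (2 * μ) : ℝ)) (𝓝[≠] z) (𝓝 0) := by
        have h : Tendsto (fun w : Euc m => (-‖w - z‖ / (2 * μ) : ℝ)) (𝓝 z)
            (𝓝 (-‖(z : Euc m) - z‖ / (2 * μ))) :=
          (((continuous_id.sub continuous_const).norm.neg.div_const (2 * μ)).tendsto z)
        simpa using h.mono_left nhdsWithin_le_nhds
      have h : Tendsto (fun r : ℝ => (r : EReal)) (𝓝 0) (𝓝 ((0:ℝ) : EReal)) :=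
        (continuous_coe_real_ereal).tendsto 0
      have h' := h.comp hr
      rw [EReal.coe_zero] at h'
      exact h'
    have h1 : ∀ᶠ w in 𝓝[≠] z, ((-‖w - z‖ / (2 * μ) : ℝ) : EReal) ≤
        (g w - g z - ((inner ℝ v (w - z) : ℝ) : EReal)) / ((‖w - z‖ : ℝ) : EReal) := by
      filter_upwards [self_mem_nhdsWithin] with w hw
      exact claim w hw
    have h3 := liminf_le_liminf h1
    rw [h2.liminf_eq] at h3
    exact h3

lemma theta_eq (f : Euc n → ℝ) (c : Euc n → Euc m) (g : Euc m → EReal)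
    (x : Euc n) (z y : Euc m) (hy : y ∈ limSubdiff g z) :
    Theta f c g x z y = ((‖fderiv ℝ (LagFn f c y) x‖ + ‖c x - z‖ : ℝ) : EReal) := by
  have h1 : (⨅ v ∈ limSubdiff g z, ((‖y - v‖ : ℝ) : EReal)) = 0 := by
    apply le_antisymm
    · calc (⨅ v ∈ limSubdiff g z, ((‖y - v‖ : ℝ) : EReal)) ≤ ((‖y - y‖ : ℝ) : EReal) :=
        iInf₂_le y hy
      _ = 0 := by simp
    · exact le_iInf₂ fun v _ => EReal.coe_nonneg.2 (norm_nonneg _)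
  rw [Theta, h1, add_zero]

set_option maxHeartbeats 1000000

theorem statement19 {n m : ℕ}
    (f : Euc n → ℝ) (c : Euc n → Euc m) (g : Euc m → EReal)
    (hf : ContDiff ℝ 2 f) (hc : ContDiff ℝ 2 c)
    (hgp : ProperFn g) (hglsc : LowerSemicontinuous g) (hgpb : ProxBounded g)
    (hphi : ∃ r : ℝ, (⨅ x : Euc n, ((f x : EReal) + g (c x))) = (r : EReal))
    (xbar : Euc n) (ybar : Euc m) (hybar : ybar ∈ Lambda f c g xbar)
    (ρ : ℝ) (hρ : 0 < ρ) (U : Set (Euc n × Euc m × Euc m))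
    (hU : U ∈ 𝓝 ((xbar, c xbar, ybar) : Euc n × Euc m × Euc m))
    (hub : ∀ (x : Euc n) (z y : Euc m), (x, z, y) ∈ U → z ∈ edom g →
      ((‖x - xbar‖ + ‖z - c xbar‖ + ‖y - ybar‖ : ℝ) : EReal) ≤
        (ρ : EReal) * Theta f c g x z y)
    (A : ALMSeq n m f c g)
    (hε0 : Tendsto A.ε atTop (𝓝 0))
    (hxy : Tendsto (fun k => (A.x k, A.y k)) atTop (𝓝 (xbar, ybar)))
    (hyh : ∀ᶠ k in atTop, A.yhat (k + 1) = A.y k)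
    (hlo : ∀ δ : ℝ, 0 < δ → ∀ᶠ k in atTop,
      (A.ε (k + 1) : EReal) ≤ (δ : EReal) * Theta f c g (A.x k) (A.z k) (A.y k)) :
    (∀ q : ℝ, 0 < q → q < 1 → ∃ μbar : ℝ, 0 < μbar ∧
      ((∀ᶠ k in atTop, A.μ k ≤ μbar) →
        Tendsto A.z atTop (𝓝 (c xbar)) ∧
        ∀ᶠ k in atTop,
          ‖A.x (k + 1) - xbar‖ + ‖A.z (k + 1) - c xbar‖ + ‖A.y (k + 1) - ybar‖ ≤
            q * (‖A.x k - xbar‖ + ‖A.z k - c xbar‖ + ‖A.y k - ybar‖))) ∧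
    ((Antitone A.μ ∧ Tendsto A.μ atTop (𝓝 0)) →
      Tendsto A.z atTop (𝓝 (c xbar)) ∧
      Tendsto (fun k =>
          (‖A.x (k + 1) - xbar‖ + ‖A.z (k + 1) - c xbar‖ + ‖A.y (k + 1) - ybar‖) /
            (‖A.x k - xbar‖ + ‖A.z k - c xbar‖ + ‖A.y k - ybar‖)) atTop (𝓝 0)) := by
  obtain ⟨hgb, w0, hw0⟩ := hgp
  have hμpos : ∀ k, 0 < A.μ k := fun k => (A.hμthr k).1
  have hzdom : ∀ k, g (A.z k) ≠ ⊤ := by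
    intro k htop
    have h1 := A.hprox k w0
    rw [htop, EReal.top_add_coe] at h1
    have h2 : g w0 + ((‖w0 - (c (A.x k) + A.μ k • A.yhat k)‖ ^ 2 / (2 * A.μ k) : ℝ) : EReal) < ⊤ :=
      EReal.add_lt_top hw0.ne (EReal.coe_ne_top _)
    exact h2.ne (top_le_iff.mp h1)
  have hzedom : ∀ k, A.z k ∈ edom g := fun k => lt_top_iff_ne_top.mpr (hzdom k)
  have hylim : ∀ k, A.y k ∈ limSubdiff g (A.z k) := by
    intro k
    have hmem := prox_mem_regSubdiff g hgb (hμpos k) (c (A.x k) + A.μ k • A.yhat k) (A.z k)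
      (hzdom k) (A.hprox k)
    have heq : A.y k = (A.μ k)⁻¹ • (c (A.x k) + A.μ k • A.yhat k - A.z k) := by
      rw [A.hy k,
        show c (A.x k) + A.μ k • A.yhat k - A.z k = (c (A.x k) - A.z k) + A.μ k • A.yhat k
          from by abel,
        smul_add, smul_smul, inv_mul_cancel₀ (ne_of_gt (hμpos k)), one_smul]
      abel
    rw [heq]
    exact regSubdiff_subset_limSubdiff g _ hmem
  set T : ℕ → ℝ := fun k => ‖fderiv ℝ (LagFn f c (A.y k)) (A.x k)‖ + ‖c (A.x k) - A.z k‖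
    with hT
  have hΘ : ∀ k, Theta f c g (A.x k) (A.z k) (A.y k) = ((T k : ℝ) : EReal) :=
    fun k => theta_eq f c g _ _ _ (hylim k)
  have hx : Tendsto A.x atTop (𝓝 xbar) := (continuous_fst.tendsto _).comp hxy
  have hyt : Tendsto A.y atTop (𝓝 ybar) := (continuous_snd.tendsto _).comp hxy
  have hμmono : ∀ k, A.μ (k + 1) ≤ A.μ k := by
    intro k; rw [A.hμupd k]; split
    · exact le_rfl
    · nlinarith [hμpos k, A.hκ.1, A.hκ.2]
  have hμle0 : ∀ k, A.μ k ≤ A.μ 0 := fun k => antitone_nat_of_succ_le hμmono (Nat.zero_le k)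
  have hVy : ∀ k, ‖c (A.x k) - A.z k‖ = A.μ k * ‖A.y k - A.yhat k‖ := by
    intro k
    have h : A.y k - A.yhat k = (A.μ k)⁻¹ • (c (A.x k) - A.z k) := by rw [A.hy k]; abel
    rw [h, norm_smul, Real.norm_eq_abs, abs_of_pos (inv_pos.mpr (hμpos k)), ← mul_assoc,
      mul_inv_cancel₀ (hμpos k).ne', one_mul]
  have hydiff : Tendsto (fun k => ‖A.y (k + 1) - A.y k‖) atTop (𝓝 0) := by
    have h1 : Tendsto (fun k => A.y (k + 1)) atTop (𝓝 ybar) :=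
      (tendsto_add_atTop_iff_nat 1).mpr hyt
    have h2 := (h1.sub hyt).norm
    simpa using h2
  have hV0 : Tendsto (fun k => ‖c (A.x k) - A.z k‖) atTop (𝓝 0) := by
    apply (tendsto_add_atTop_iff_nat 1).mp
    have hg0 : Tendsto (fun k => A.μ 0 * ‖A.y (k + 1) - A.y k‖) atTop (𝓝 0) := by
      simpa using (tendsto_const_nhds (x := A.μ 0)).mul hydiff
    refine squeeze_zero' (Eventually.of_forall fun k => norm_nonneg _) ?_ hg0
    filter_upwards [hyh] with k hk
    rw [hVy (k + 1), hk]
    exact mul_le_mul_of_nonneg_right (hμle0 (k + 1)) (norm_nonneg _)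
  have hztend : Tendsto A.z atTop (𝓝 (c xbar)) := by
    have h1 : Tendsto (fun k => c (A.x k)) atTop (𝓝 (c xbar)) :=
      (hc.continuous.tendsto xbar).comp hx
    have h2 : Tendsto (fun k => c (A.x k) - A.z k) atTop (𝓝 0) :=
      tendsto_zero_iff_norm_tendsto_zero.mpr hV0
    have h3 := h1.sub h2
    simpa using h3
  obtain ⟨K, t, ht, hHlip⟩ := (Hcd hf hc).contDiffAt.exists_lipschitzOnWith (x := (xbar, ybar))
  obtain ⟨Kc, s, hs, hclip⟩ :=
    ((hc.of_le one_le_two).contDiffAt (x := xbar)).exists_lipschitzOnWith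
  have hH0 : fderiv ℝ f xbar + (innerSL ℝ ybar).comp (fderiv ℝ c xbar) = 0 := by
    rw [← fderiv_lag hf hc ybar xbar]
    exact hybar.1
  set C : ℝ := (K : ℝ) + (Kc : ℝ) + 1 with hCdef
  have hC : 0 < C := by rw [hCdef]; positivity
  clear_value C
  have h_t : ∀ᶠ k in atTop, (A.x k, A.y k) ∈ t := hxy ht
  have h_s : ∀ᶠ k in atTop, A.x k ∈ s := hx hs
  have hTleC : ∀ᶠ k in atTop,
      T k ≤ C * (‖A.x k - xbar‖ + ‖A.z k - c xbar‖ + ‖A.y k - ybar‖) := by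
    filter_upwards [h_t, h_s] with k h1 h2
    have hL : ‖fderiv ℝ (LagFn f c (A.y k)) (A.x k)‖ ≤
        (K:ℝ) * (‖A.x k - xbar‖ + ‖A.y k - ybar‖) := by
      rw [fderiv_lag hf hc]
      have hd : dist (fderiv ℝ f (A.x k) + (innerSL ℝ (A.y k)).comp (fderiv ℝ c (A.x k)))
          (fderiv ℝ f xbar + (innerSL ℝ ybar).comp (fderiv ℝ c xbar)) ≤
          (K : ℝ) * dist ((A.x k, A.y k) : Euc n × Euc m) (xbar, ybar) :=
        hHlip.dist_le_mul (A.x k, A.y k) h1 (xbar, ybar) (mem_of_mem_nhds ht)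
      rw [hH0, dist_zero_right] at hd
      refine le_trans hd ?_
      have hdd : dist ((A.x k, A.y k) : Euc n × Euc m) (xbar, ybar) ≤
          ‖A.x k - xbar‖ + ‖A.y k - ybar‖ := by
        rw [Prod.dist_eq]
        exact max_le (by rw [dist_eq_norm]; linarith [norm_nonneg (A.y k - ybar)])
          (by rw [dist_eq_norm]; linarith [norm_nonneg (A.x k - xbar)])
      exact mul_le_mul_of_nonneg_left hdd K.coe_nonneg
    have hcl : ‖c (A.x k) - c xbar‖ ≤ (Kc:ℝ) * ‖A.x k - xbar‖ := by
      have h := hclip.dist_le_mul (A.x k) h2 xbar (mem_of_mem_nhds hs)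
      rwa [dist_eq_norm, dist_eq_norm] at h
    have hV : ‖c (A.x k) - A.z k‖ ≤ ‖c (A.x k) - c xbar‖ + ‖A.z k - c xbar‖ := by
      calc ‖c (A.x k) - A.z k‖ = ‖(c (A.x k) - c xbar) + (c xbar - A.z k)‖ := by
            rw [show c (A.x k) - A.z k = (c (A.x k) - c xbar) + (c xbar - A.z k) from by abel]
        _ ≤ ‖c (A.x k) - c xbar‖ + ‖c xbar - A.z k‖ := norm_add_le _ _
        _ = ‖c (A.x k) - c xbar‖ + ‖A.z k - c xbar‖ := by rw [norm_sub_rev (c xbar)]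
    have hTk : T k = ‖fderiv ℝ (LagFn f c (A.y k)) (A.x k)‖ + ‖c (A.x k) - A.z k‖ := by
      rw [hT]
    rw [hTk, hCdef]
    nlinarith [norm_nonneg (A.x k - xbar), norm_nonneg (A.z k - c xbar),
      norm_nonneg (A.y k - ybar), K.coe_nonneg, Kc.coe_nonneg,
      mul_nonneg K.coe_nonneg (norm_nonneg (A.z k - c xbar)),
      mul_nonneg Kc.coe_nonneg (norm_nonneg (A.z k - c xbar)),
      mul_nonneg Kc.coe_nonneg (norm_nonneg (A.y k - ybar))]
  have htriple : Tendsto (fun k => (A.x k, A.z k, A.y k)) atTop (𝓝 (xbar, c xbar, ybar)) :=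
    hx.prodMk_nhds (hztend.prodMk_nhds hyt)
  have hUmem : ∀ᶠ k in atTop, (A.x k, A.z k, A.y k) ∈ U := htriple hU
  have hRρ : ∀ᶠ k in atTop,
      ‖A.x k - xbar‖ + ‖A.z k - c xbar‖ + ‖A.y k - ybar‖ ≤ ρ * T k := by
    filter_upwards [hUmem] with k hk
    have h := hub (A.x k) (A.z k) (A.y k) hk (hzedom k)
    rw [hΘ k, ← EReal.coe_mul, EReal.coe_le_coe_iff] at h
    exact h
  have hmaster : ∀ a : ℝ, 0 < a →
      (∀ᶠ k in atTop, A.μ (k + 1) ≤ min (1 / (2 * ρ)) (a / (8 * ρ))) →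
      ∀ᶠ k in atTop,
        ‖A.x (k + 1) - xbar‖ + ‖A.z (k + 1) - c xbar‖ + ‖A.y (k + 1) - ybar‖ ≤
          a * (‖A.x k - xbar‖ + ‖A.z k - c xbar‖ + ‖A.y k - ybar‖) := by
    intro a ha hμa
    set δ : ℝ := a / (8 * ρ * C) with hδdef
    have hδ : 0 < δ := by rw [hδdef]; positivity
    clear_value δ
    have hε' : ∀ᶠ k in atTop, A.ε (k + 1) ≤ δ * T k := by
      filter_upwards [hlo δ hδ] with k hk
      rw [hΘ k, ← EReal.coe_mul, EReal.coe_le_coe_iff] at hk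
      exact hk
    filter_upwards [hε', hRρ, ev_succ hRρ, hTleC, hyh, hμa] with k h1 h2 h3 h4 h5 h6
    set Rk : ℝ := ‖A.x k - xbar‖ + ‖A.z k - c xbar‖ + ‖A.y k - ybar‖ with hRk
    set Rk1 : ℝ := ‖A.x (k + 1) - xbar‖ + ‖A.z (k + 1) - c xbar‖ + ‖A.y (k + 1) - ybar‖
      with hRk1
    have hRknn : 0 ≤ Rk := by rw [hRk]; positivity
    have hRk1nn : 0 ≤ Rk1 := by rw [hRk1]; positivity
    clear_value Rk Rk1
    have e3 := A.hdual (k + 1)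
    have e4 : ‖c (A.x (k + 1)) - A.z (k + 1)‖ = A.μ (k + 1) * ‖A.y (k + 1) - A.y k‖ := by
      rw [hVy (k + 1), h5]
    have hTk1 : T (k + 1) =
        ‖fderiv ℝ (LagFn f c (A.y (k + 1))) (A.x (k + 1))‖ + ‖c (A.x (k + 1)) - A.z (k + 1)‖ := by
      rw [hT]
    have e7 : ‖A.y (k + 1) - A.y k‖ ≤ Rk1 + Rk := by
      have htr : ‖A.y (k + 1) - A.y k‖ ≤ ‖A.y (k + 1) - ybar‖ + ‖A.y k - ybar‖ := by
        rw [show A.y (k + 1) - A.y k = (A.y (k + 1) - ybar) - (A.y k - ybar) from by abel]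
        exact norm_sub_le _ _
      have hny1 : ‖A.y (k + 1) - ybar‖ ≤ Rk1 := by
        rw [hRk1]; linarith [norm_nonneg (A.x (k + 1) - xbar), norm_nonneg (A.z (k + 1) - c xbar)]
      have hny : ‖A.y k - ybar‖ ≤ Rk := by
        rw [hRk]; linarith [norm_nonneg (A.x k - xbar), norm_nonneg (A.z k - c xbar)]
      linarith
    have b1 : Rk1 ≤ ρ * (A.ε (k + 1) + A.μ (k + 1) * ‖A.y (k + 1) - A.y k‖) := by
      refine le_trans h3 ?_
      apply mul_le_mul_of_nonneg_left _ hρ.le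
      rw [hTk1, e4]
      linarith
    have b2 : A.ε (k + 1) ≤ δ * (C * Rk) :=
      h1.trans (mul_le_mul_of_nonneg_left h4 hδ.le)
    have b3 : A.μ (k + 1) * ‖A.y (k + 1) - A.y k‖ ≤ A.μ (k + 1) * (Rk1 + Rk) :=
      mul_le_mul_of_nonneg_left e7 (hμpos (k + 1)).le
    have c1 : ρ * A.μ (k + 1) ≤ 1 / 2 := by
      have h := (le_min_iff.mp h6).1
      have h2' := mul_le_mul_of_nonneg_left h hρ.le
      rw [show ρ * (1 / (2 * ρ)) = 1 / 2 from by field_simp] at h2'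
      exact h2'
    have c2 : ρ * A.μ (k + 1) ≤ a / 8 := by
      have h := (le_min_iff.mp h6).2
      have h2' := mul_le_mul_of_nonneg_left h hρ.le
      rw [show ρ * (a / (8 * ρ)) = a / 8 from by field_simp] at h2'
      exact h2'
    have e9 : ρ * δ * C = a / 8 := by
      rw [hδdef]; field_simp
    have d1 : Rk1 ≤ ρ * (δ * (C * Rk)) + ρ * (A.μ (k + 1) * (Rk1 + Rk)) := by
      calc Rk1 ≤ ρ * (A.ε (k + 1) + A.μ (k + 1) * ‖A.y (k + 1) - A.y k‖) := b1
        _ ≤ ρ * (δ * (C * Rk) + A.μ (k + 1) * (Rk1 + Rk)) :=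
            mul_le_mul_of_nonneg_left (add_le_add b2 b3) hρ.le
        _ = ρ * (δ * (C * Rk)) + ρ * (A.μ (k + 1) * (Rk1 + Rk)) := by ring
    have d2 : ρ * (δ * (C * Rk)) = a / 8 * Rk := by
      rw [show ρ * (δ * (C * Rk)) = ρ * δ * C * Rk from by ring, e9]
    have d3 : ρ * (A.μ (k + 1) * (Rk1 + Rk)) =
        ρ * A.μ (k + 1) * Rk1 + ρ * A.μ (k + 1) * Rk := by ring
    have d4 : ρ * A.μ (k + 1) * Rk1 ≤ 1 / 2 * Rk1 := mul_le_mul_of_nonneg_right c1 hRk1nn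
    have d5 : ρ * A.μ (k + 1) * Rk ≤ a / 8 * Rk := mul_le_mul_of_nonneg_right c2 hRknn
    have d6 : 0 ≤ a * Rk := mul_nonneg ha.le hRknn
    linarith
  constructor
  · intro q hq0 hq1
    refine ⟨min (1 / (2 * ρ)) (q / (8 * ρ)), lt_min (by positivity) (by positivity), ?_⟩
    intro hμb
    exact ⟨hztend, hmaster q hq0 (ev_succ hμb)⟩
  · rintro ⟨-, hμ0⟩
    refine ⟨hztend, ?_⟩
    rw [Metric.tendsto_atTop]
    intro ε hε
    have hb : (0:ℝ) < min (1 / (2 * ρ)) ((ε / 2) / (8 * ρ)) :=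
      lt_min (by positivity) (by positivity)
    have hev : ∀ᶠ k in atTop, A.μ k ≤ min (1 / (2 * ρ)) ((ε / 2) / (8 * ρ)) :=
      hμ0.eventually_le_const hb
    have hm := hmaster (ε / 2) (by positivity) (ev_succ hev)
    obtain ⟨N, hN⟩ := eventually_atTop.mp hm
    refine ⟨N, fun k hk => ?_⟩
    have h1 := hN k hk
    set Rk : ℝ := ‖A.x k - xbar‖ + ‖A.z k - c xbar‖ + ‖A.y k - ybar‖ with hRk
    set Rk1 : ℝ := ‖A.x (k + 1) - xbar‖ + ‖A.z (k + 1) - c xbar‖ + ‖A.y (k + 1) - ybar‖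
      with hRk1
    have hRknn : 0 ≤ Rk := by rw [hRk]; positivity
    have hRk1nn : 0 ≤ Rk1 := by rw [hRk1]; positivity
    clear_value Rk Rk1
    rw [Real.dist_eq, sub_zero, abs_of_nonneg (div_nonneg hRk1nn hRknn)]
    rcases eq_or_lt_of_le hRknn with h0 | h0
    · rw [← h0, div_zero]
      exact hε
    · calc Rk1 / Rk ≤ ε / 2 := (div_le_iff₀ h0).mpr h1
        _ < ε := by linarith


end Paper
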